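/- Displacement bound for the inner fixed-point iteration of the practical algorithm (from the proof of Lemma B.2): Let H be an n×n real symmetric matrix with σ_max(H) ≤ M, U an n×N real matrix with σ_max(U) ≤ α, and s > 0 with 4·s·α²·M < 2. Define Ũ⁽⁰⁾ = U and, for k ≥ 1, Ũ⁽ᵏ⁾ = (Iₙ + (s/2)·𝒜_{Ũ⁽ᵏ⁻¹⁾})⁻¹·U (the inverse exists since 𝒜 is skew-symmetric). Then for every p ≥ 0, ‖Ũ⁽ᵖ⁾ − U‖_F ≤ (s/(2 − 4·s·α²·M))·‖𝒜_U·U‖_F. -/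
import Mathlib


open Matrix

noncomputable section

/-- The skew-symmetric commutator 𝒜_W = H·W·Wᵀ − W·Wᵀ·H. -/
def commA {n N : ℕ} (H : Matrix (Fin n) (Fin n) ℝ) (W : Matrix (Fin n) (Fin N) ℝ) :
    Matrix (Fin n) (Fin n) ℝ :=
  H * W * Wᵀ - W * Wᵀ * H

/-- Frobenius norm of a real matrix. -/
def frobNorm {m k : ℕ} (A : Matrix (Fin m) (Fin k) ℝ) : ℝ :=
  Real.sqrt (∑ i, ∑ j, (A i j) ^ 2)

/-- Largest singular value (ℓ²-operator norm) of a real matrix. -/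
def sigmaMax {m k : ℕ} (A : Matrix (Fin m) (Fin k) ℝ) : ℝ :=
  ‖LinearMap.toContinuousLinearMap (Matrix.toEuclideanLin A)‖

open scoped Matrix.Norms.L2Operator

lemma sigmaMax_nonneg {m k : ℕ} (A : Matrix (Fin m) (Fin k) ℝ) : 0 ≤ sigmaMax A :=
  norm_nonneg _

lemma sigmaMax_transpose {m k : ℕ} (A : Matrix (Fin m) (Fin k) ℝ) :
    sigmaMax Aᵀ = sigmaMax A := by
  have h : Aᴴ = Aᵀ := by ext i j; simp [Matrix.conjTranspose_apply]
  show ‖Aᵀ‖ = ‖A‖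
  rw [← h, Matrix.l2_opNorm_conjTranspose]

lemma sigmaMax_mul_le {m k l : ℕ} (A : Matrix (Fin m) (Fin k) ℝ) (B : Matrix (Fin k) (Fin l) ℝ) :
    sigmaMax (A * B) ≤ sigmaMax A * sigmaMax B := Matrix.l2_opNorm_mul A B

lemma frobNorm_nonneg {m k : ℕ} (A : Matrix (Fin m) (Fin k) ℝ) : 0 ≤ frobNorm A :=
  Real.sqrt_nonneg _

lemma frobNorm_sq {m k : ℕ} (A : Matrix (Fin m) (Fin k) ℝ) :
    frobNorm A ^ 2 = ∑ i, ∑ j, (A i j) ^ 2 :=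
  Real.sq_sqrt (Finset.sum_nonneg fun _ _ => Finset.sum_nonneg fun _ _ => sq_nonneg _)

/-- The matrix as an element of `PiLp 2` of `PiLp 2`, realizing the Frobenius norm. -/
def toE {m k : ℕ} (A : Matrix (Fin m) (Fin k) ℝ) :
    PiLp 2 (fun _ : Fin m => PiLp 2 (fun _ : Fin k => ℝ)) :=
  (WithLp.equiv 2 _).symm fun i => (WithLp.equiv 2 _).symm fun j => A i j

lemma frobNorm_eq {m k : ℕ} (A : Matrix (Fin m) (Fin k) ℝ) : frobNorm A = ‖toE A‖ := by
  rw [frobNorm, PiLp.norm_eq_of_L2]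
  congr 1
  refine Finset.sum_congr rfl fun i _ => ?_
  rw [PiLp.norm_sq_eq_of_L2]
  refine Finset.sum_congr rfl fun j _ => ?_
  simp [toE, Real.norm_eq_abs, sq_abs]

lemma toE_add {m k : ℕ} (A B : Matrix (Fin m) (Fin k) ℝ) : toE (A + B) = toE A + toE B := rfl
lemma toE_smul {m k : ℕ} (c : ℝ) (A : Matrix (Fin m) (Fin k) ℝ) : toE (c • A) = c • toE A := rfl

lemma frobNorm_add_le {m k : ℕ} (A B : Matrix (Fin m) (Fin k) ℝ) :
    frobNorm (A + B) ≤ frobNorm A + frobNorm B := by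
  rw [frobNorm_eq, frobNorm_eq, frobNorm_eq, toE_add]; exact norm_add_le _ _

lemma frobNorm_smul {m k : ℕ} (c : ℝ) (A : Matrix (Fin m) (Fin k) ℝ) :
    frobNorm (c • A) = |c| * frobNorm A := by
  rw [frobNorm_eq, frobNorm_eq, toE_smul, norm_smul, Real.norm_eq_abs]

lemma frobNorm_sub_le {m k : ℕ} (A B : Matrix (Fin m) (Fin k) ℝ) :
    frobNorm (A - B) ≤ frobNorm A + frobNorm B := by
  have h : A - B = A + (-1 : ℝ) • B := by
    rw [neg_one_smul, sub_eq_add_neg]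
  rw [h]
  refine (frobNorm_add_le _ _).trans ?_
  rw [frobNorm_smul]
  simp

lemma frobNorm_transpose {m k : ℕ} (A : Matrix (Fin m) (Fin k) ℝ) :
    frobNorm Aᵀ = frobNorm A := by
  rw [frobNorm, frobNorm, Finset.sum_comm]
  rfl

lemma frobNorm_mul_le {m k l : ℕ} (A : Matrix (Fin m) (Fin k) ℝ) (X : Matrix (Fin k) (Fin l) ℝ) :
    frobNorm (A * X) ≤ sigmaMax A * frobNorm X := by
  have hsq : frobNorm (A * X) ^ 2 ≤ (sigmaMax A * frobNorm X) ^ 2 := by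
    rw [frobNorm_sq, Finset.sum_comm]
    have hX : (sigmaMax A * frobNorm X) ^ 2 = sigmaMax A ^ 2 * ∑ j, ∑ i, (X i j) ^ 2 := by
      rw [mul_pow, frobNorm_sq, Finset.sum_comm]
    rw [hX, Finset.mul_sum]
    refine Finset.sum_le_sum fun j _ => ?_
    set x : EuclideanSpace ℝ (Fin k) := (WithLp.equiv 2 _).symm (fun i => X i j) with hx
    have hcol : ∑ i, ((A * X) i j) ^ 2 = ‖Matrix.toEuclideanLin A x‖ ^ 2 := by
      rw [EuclideanSpace.norm_eq, Real.sq_sqrt (Finset.sum_nonneg fun _ _ => sq_nonneg _)]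
      refine Finset.sum_congr rfl fun i _ => ?_
      simp [hx, Matrix.toEuclideanLin_apply, Matrix.mulVec, Matrix.mul_apply,
        dotProduct, Real.norm_eq_abs, sq_abs]
    have hxn : ‖x‖ ^ 2 = ∑ i, (X i j) ^ 2 := by
      rw [EuclideanSpace.norm_eq, Real.sq_sqrt (Finset.sum_nonneg fun _ _ => sq_nonneg _)]
      refine Finset.sum_congr rfl fun i _ => ?_
      simp [hx, Real.norm_eq_abs, sq_abs]
    have hle : ‖Matrix.toEuclideanLin A x‖ ≤ sigmaMax A * ‖x‖ := by
      have := (LinearMap.toContinuousLinearMap (Matrix.toEuclideanLin A)).le_opNorm x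
      simpa [sigmaMax] using this
    rw [hcol, ← hxn]
    nlinarith [norm_nonneg (Matrix.toEuclideanLin A x), norm_nonneg x, sigmaMax_nonneg A]
  nlinarith [frobNorm_nonneg (A * X), mul_nonneg (sigmaMax_nonneg A) (frobNorm_nonneg X)]

lemma frobNorm_mul_le' {m k l : ℕ} (X : Matrix (Fin m) (Fin k) ℝ) (B : Matrix (Fin k) (Fin l) ℝ) :
    frobNorm (X * B) ≤ frobNorm X * sigmaMax B := by
  calc frobNorm (X * B) = frobNorm ((X * B)ᵀ) := (frobNorm_transpose _).symm
    _ = frobNorm (Bᵀ * Xᵀ) := by rw [Matrix.transpose_mul]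
    _ ≤ sigmaMax Bᵀ * frobNorm Xᵀ := frobNorm_mul_le _ _
    _ = frobNorm X * sigmaMax B := by rw [sigmaMax_transpose, frobNorm_transpose]; ring

lemma skew_mulVec_sq_le {n : ℕ} (K : Matrix (Fin n) (Fin n) ℝ) (hK : Kᵀ = -K)
    (x : Fin n → ℝ) : ∑ i, (x i) ^ 2 ≤ ∑ i, (((1 + K) *ᵥ x) i) ^ 2 := by
  have hmv : (1 + K) *ᵥ x = x + K *ᵥ x := by
    rw [Matrix.add_mulVec, Matrix.one_mulVec]
  set y : Fin n → ℝ := K *ᵥ x with hy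
  have hdot : x ⬝ᵥ y = 0 := by
    have h1 : x ⬝ᵥ y = (Kᵀ *ᵥ x) ⬝ᵥ x := by
      rw [hy, Matrix.dotProduct_mulVec, ← Matrix.mulVec_transpose]
    have h2 : (Kᵀ *ᵥ x) ⬝ᵥ x = -(x ⬝ᵥ y) := by
      rw [hK, Matrix.neg_mulVec, neg_dotProduct, hy, dotProduct_comm]
    have := h1.trans h2
    linarith
  have hexp : ∑ i, (((1 + K) *ᵥ x) i) ^ 2
      = ∑ i, (x i) ^ 2 + 2 * (x ⬝ᵥ y) + ∑ i, (y i) ^ 2 := by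
    rw [hmv, dotProduct, Finset.mul_sum, ← Finset.sum_add_distrib,
      ← Finset.sum_add_distrib]
    refine Finset.sum_congr rfl fun i _ => ?_
    simp [Pi.add_apply]; ring
  have hynn : 0 ≤ ∑ i, (y i) ^ 2 := Finset.sum_nonneg fun _ _ => sq_nonneg _
  rw [hexp, hdot]; linarith

lemma isUnit_one_add_skew {n : ℕ} (K : Matrix (Fin n) (Fin n) ℝ) (hK : Kᵀ = -K) :
    IsUnit (1 + K) := by
  rw [← Matrix.mulVec_injective_iff_isUnit]
  intro x y hxy
  have h0 : (1 + K) *ᵥ (x - y) = 0 := by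
    rw [Matrix.mulVec_sub, hxy, sub_self]
  have hle := skew_mulVec_sq_le K hK (x - y)
  rw [h0] at hle
  simp only [Pi.zero_apply, ne_eq, OfNat.ofNat_ne_zero, not_false_eq_true, zero_pow,
    Finset.sum_const_zero] at hle
  have hz : ∀ i, (x - y) i = 0 := by
    intro i
    have hnn : ∀ j ∈ Finset.univ, (0:ℝ) ≤ ((x - y) j) ^ 2 := fun _ _ => sq_nonneg _
    have := (Finset.sum_eq_zero_iff_of_nonneg hnn).mp
      (le_antisymm hle (Finset.sum_nonneg hnn)) i (Finset.mem_univ i)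
    exact pow_eq_zero_iff (by norm_num) |>.mp this
  funext i
  have := hz i
  simpa [sub_eq_zero] using sub_eq_zero.mp (by simpa using this)

lemma sigmaMax_inv_one_add_skew {n : ℕ} (K : Matrix (Fin n) (Fin n) ℝ) (hK : Kᵀ = -K) :
    sigmaMax (1 + K)⁻¹ ≤ 1 := by
  have hUnit := isUnit_one_add_skew K hK
  refine ContinuousLinearMap.opNorm_le_bound _ zero_le_one fun v => ?_
  set yf : Fin n → ℝ := (WithLp.equiv 2 _) v with hyf
  set x : Fin n → ℝ := (1 + K)⁻¹ *ᵥ yf with hx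
  have hBx : (1 + K) *ᵥ x = yf := by
    rw [hx, Matrix.mulVec_mulVec,
      Matrix.mul_nonsing_inv _ ((Matrix.isUnit_iff_isUnit_det _).mp hUnit), Matrix.one_mulVec]
  have hle := skew_mulVec_sq_le K hK x
  rw [hBx] at hle
  have happ : (LinearMap.toContinuousLinearMap (Matrix.toEuclideanLin (1 + K)⁻¹)) v
      = (WithLp.equiv 2 (Fin n → ℝ)).symm x := by
    simp [Matrix.toEuclideanLin_apply, hx, hyf]
  rw [happ]
  have h1 : ‖(WithLp.equiv 2 (Fin n → ℝ)).symm x‖ ^ 2 = ∑ i, (x i) ^ 2 := by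
    rw [EuclideanSpace.norm_eq, Real.sq_sqrt (Finset.sum_nonneg fun _ _ => sq_nonneg _)]
    exact Finset.sum_congr rfl fun i _ => by simp [Real.norm_eq_abs, sq_abs]
  have h2 : ‖v‖ ^ 2 = ∑ i, (yf i) ^ 2 := by
    rw [EuclideanSpace.norm_eq, Real.sq_sqrt (Finset.sum_nonneg fun _ _ => sq_nonneg _)]
    exact Finset.sum_congr rfl fun i _ => by simp [hyf, Real.norm_eq_abs, sq_abs]
  have := norm_nonneg ((WithLp.equiv 2 (Fin n → ℝ)).symm x)
  have := norm_nonneg v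
  nlinarith [h1, h2, hle]

lemma commA_transpose {n N : ℕ} (H : Matrix (Fin n) (Fin n) ℝ) (hH : H.IsSymm)
    (W : Matrix (Fin n) (Fin N) ℝ) : (commA H W)ᵀ = -(commA H W) := by
  have hHt : Hᵀ = H := hH
  simp only [commA, Matrix.transpose_sub, Matrix.transpose_mul, Matrix.transpose_transpose, hHt,
    Matrix.mul_assoc]
  abel

/-- Displacement bound for the inner fixed-point iteration of the practical
algorithm (from the proof of Lemma B.2). -/
theorem inner_iteration_displacement_bound
    {n N : ℕ} (H : Matrix (Fin n) (Fin n) ℝ) (hH : H.IsSymm)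
    (M α : ℝ) (hM : sigmaMax H ≤ M)
    (U : Matrix (Fin n) (Fin N) ℝ) (hU : sigmaMax U ≤ α)
    (s : ℝ) (hs : 0 < s) (hsmall : 4 * s * α ^ 2 * M < 2)
    (Ut : ℕ → Matrix (Fin n) (Fin N) ℝ)
    (h0 : Ut 0 = U)
    (hrec : ∀ k, Ut (k + 1) = (1 + (s / 2) • commA H (Ut k))⁻¹ * U) :
    ∀ p : ℕ, frobNorm (Ut p - U) ≤ s / (2 - 4 * s * α ^ 2 * M) * frobNorm (commA H U * U) := by
  have hα : 0 ≤ α := le_trans (sigmaMax_nonneg U) hU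
  have hM0 : 0 ≤ M := le_trans (sigmaMax_nonneg H) hM
  set F : ℝ := frobNorm (commA H U * U) with hFdef
  have hF : 0 ≤ F := frobNorm_nonneg _
  have hden : 0 < 2 - 4 * s * α ^ 2 * M := by linarith
  set C : ℝ := s / (2 - 4 * s * α ^ 2 * M) with hCdef
  have hC0 : 0 ≤ C := le_of_lt (div_pos hs hden)
  have hCs : C * (2 - 4 * s * α ^ 2 * M) = s := div_mul_cancel₀ s (ne_of_gt hden)
  clear_value C
  suffices h : ∀ p, sigmaMax (Ut p) ≤ α ∧ frobNorm (Ut p - U) ≤ C * F by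
    exact fun p => (h p).2
  intro p
  induction p with
  | zero =>
    refine ⟨by rw [h0]; exact hU, ?_⟩
    rw [h0, sub_self]
    have : frobNorm (0 : Matrix (Fin n) (Fin N) ℝ) = 0 := by
      simp [frobNorm]
    rw [this]
    exact mul_nonneg hC0 hF
  | succ k ih =>
    obtain ⟨hσ, hd⟩ := ih
    set W : Matrix (Fin n) (Fin N) ℝ := Ut k with hW
    set K : Matrix (Fin n) (Fin n) ℝ := (s / 2) • commA H W with hKdef
    have hKskew : Kᵀ = -K := by
      rw [hKdef, Matrix.transpose_smul, commA_transpose H hH W, smul_neg]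
    have hUnit := isUnit_one_add_skew K hKskew
    have hUnitDet := (Matrix.isUnit_iff_isUnit_det _).mp hUnit
    have hBinv : sigmaMax (1 + K)⁻¹ ≤ 1 := sigmaMax_inv_one_add_skew K hKskew
    have hrec' : Ut (k + 1) = (1 + K)⁻¹ * U := hrec k
    have hσ' : sigmaMax (Ut (k + 1)) ≤ α := by
      rw [hrec']
      calc sigmaMax ((1 + K)⁻¹ * U) ≤ sigmaMax (1 + K)⁻¹ * sigmaMax U := sigmaMax_mul_le _ _
        _ ≤ 1 * α := mul_le_mul hBinv hU (sigmaMax_nonneg _) zero_le_one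
        _ = α := one_mul α
    refine ⟨hσ', ?_⟩
    -- key algebraic identity
    have key : Ut (k + 1) - U = (-(s / 2)) • ((1 + K)⁻¹ * (commA H W * U)) := by
      rw [hrec']
      have h1 : (1 + K)⁻¹ * (1 + K) = 1 := Matrix.nonsing_inv_mul _ hUnitDet
      have h2 : U - (1 + K) * U = -((s / 2) • (commA H W * U)) := by
        rw [hKdef, Matrix.add_mul, Matrix.one_mul, Matrix.smul_mul]
        abel
      calc (1 + K)⁻¹ * U - U = (1 + K)⁻¹ * U - (1 + K)⁻¹ * ((1 + K) * U) := by
            rw [← Matrix.mul_assoc, h1, Matrix.one_mul]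
        _ = (1 + K)⁻¹ * (U - (1 + K) * U) := by rw [Matrix.mul_sub]
        _ = (1 + K)⁻¹ * (-((s / 2) • (commA H W * U))) := by rw [h2]
        _ = (-(s / 2)) • ((1 + K)⁻¹ * (commA H W * U)) := by
            rw [Matrix.mul_neg, Matrix.mul_smul, neg_smul]
    rw [key, frobNorm_smul]
    have habs : |(-(s / 2))| = s / 2 := by
      rw [abs_neg, abs_of_pos (by linarith)]
    rw [habs]
    -- contraction bound
    set Δ : Matrix (Fin n) (Fin n) ℝ := W * Wᵀ - U * Uᵀ with hΔdef
    set dk : ℝ := frobNorm (W - U) with hdk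
    have hdk0 : 0 ≤ dk := frobNorm_nonneg _
    have hΔsplit : Δ = (W - U) * Wᵀ + U * (W - U)ᵀ := by
      rw [hΔdef, Matrix.sub_mul, Matrix.transpose_sub, Matrix.mul_sub]
      abel
    have hΔ : frobNorm Δ ≤ 2 * α * dk := by
      rw [hΔsplit]
      refine (frobNorm_add_le _ _).trans ?_
      have e1 : frobNorm ((W - U) * Wᵀ) ≤ dk * α := by
        refine (frobNorm_mul_le' _ _).trans ?_
        have : sigmaMax Wᵀ ≤ α := by rw [sigmaMax_transpose]; exact hσ
        exact mul_le_mul_of_nonneg_left this hdk0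
      have e2 : frobNorm (U * (W - U)ᵀ) ≤ α * dk := by
        refine (frobNorm_mul_le _ _).trans ?_
        rw [frobNorm_transpose]
        exact mul_le_mul_of_nonneg_right hU hdk0
      linarith
    have hcsplit : commA H W * U = commA H U * U + (H * (Δ * U) - Δ * (H * U)) := by
      simp only [commA, hΔdef, Matrix.sub_mul, Matrix.mul_sub, Matrix.mul_assoc]
      abel
    have hfΔ0 : 0 ≤ frobNorm Δ := frobNorm_nonneg _
    have hΔU : frobNorm (Δ * U) ≤ frobNorm Δ * α := by
      refine (frobNorm_mul_le' _ _).trans ?_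
      exact mul_le_mul_of_nonneg_left hU hfΔ0
    have hHΔU : frobNorm (H * (Δ * U)) ≤ M * (frobNorm Δ * α) := by
      refine (frobNorm_mul_le _ _).trans ?_
      exact mul_le_mul hM hΔU (frobNorm_nonneg _) hM0
    have hHU : sigmaMax (H * U) ≤ M * α := by
      refine (sigmaMax_mul_le _ _).trans ?_
      exact mul_le_mul hM hU (sigmaMax_nonneg _) hM0
    have hΔHU : frobNorm (Δ * (H * U)) ≤ frobNorm Δ * (M * α) := by
      refine (frobNorm_mul_le' _ _).trans ?_
      exact mul_le_mul_of_nonneg_left hHU hfΔ0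
    have hT : frobNorm (commA H W * U) ≤ F + 4 * M * α ^ 2 * dk := by
      rw [hcsplit]
      refine (frobNorm_add_le _ _).trans ?_
      have h3 : frobNorm (H * (Δ * U) - Δ * (H * U))
          ≤ M * (frobNorm Δ * α) + frobNorm Δ * (M * α) := by
        refine (frobNorm_sub_le _ _).trans ?_
        linarith
      have h4 : M * (frobNorm Δ * α) + frobNorm Δ * (M * α) ≤ 4 * M * α ^ 2 * dk := by
        have h5 : frobNorm Δ * (M * α) ≤ (2 * α * dk) * (M * α) :=
          mul_le_mul_of_nonneg_right hΔ (mul_nonneg hM0 hα)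
        nlinarith [hΔ, hM0, hα, hdk0]
      linarith
    have hfinal : frobNorm ((1 + K)⁻¹ * (commA H W * U)) ≤ F + 4 * M * α ^ 2 * dk := by
      refine (frobNorm_mul_le _ _).trans ?_
      calc sigmaMax (1 + K)⁻¹ * frobNorm (commA H W * U)
          ≤ 1 * frobNorm (commA H W * U) :=
            mul_le_mul_of_nonneg_right hBinv (frobNorm_nonneg _)
        _ = frobNorm (commA H W * U) := one_mul _
        _ ≤ F + 4 * M * α ^ 2 * dk := hT
    have hdkC : dk ≤ C * F := hd
    calc s / 2 * frobNorm ((1 + K)⁻¹ * (commA H W * U))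
        ≤ s / 2 * (F + 4 * M * α ^ 2 * dk) := by
          exact mul_le_mul_of_nonneg_left hfinal (by linarith)
      _ ≤ s / 2 * (F + 4 * M * α ^ 2 * (C * F)) := by
          have h6 : 4 * M * α ^ 2 * dk ≤ 4 * M * α ^ 2 * (C * F) :=
            mul_le_mul_of_nonneg_left hdkC (by positivity)
          have hs2 : (0:ℝ) ≤ s / 2 := by linarith
          exact mul_le_mul_of_nonneg_left (by linarith) hs2
      _ = C * F := by
          linear_combination (-(F / 2)) * hCs
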